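/- Let c>0 and let F(μ,d)=∫₀¹(μ²−λ²d²)·√((1−λ²)/(c²−λ²d²)) dλ. Then for every ξ∈[−c²/2, c²/3] there exists a unique d∈[0,c] and μ∈[0,d] with F(μ,d)=0 and c²/2+ξ=μ²+d²/2; the resulting map f:[−c²/2,c²/3]→[0,c], f(ξ)=d, is continuous and strictly increasing with f(−c²/2)=0 and f(c²/3)=c, and the map d↦μ(d) is continuous and strictly increasing on [0,c] with μ(0)=0 and μ(c)=c/√3. -/

import Mathlib

/-- `F(μ,d) = ∫₀¹ (μ² − λ²d²)·√((1−λ²)/(c²−λ²d²)) dλ`. -/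
noncomputable def Ffun (c μ d : ℝ) : ℝ :=
  ∫ l in (0:ℝ)..1, (μ^2 - l^2 * d^2) * Real.sqrt ((1 - l^2) / (c^2 - l^2 * d^2))

open MeasureTheory Set intervalIntegral

noncomputable def wfn (c d l : ℝ) : ℝ := Real.sqrt ((1 - l^2) / (c^2 - l^2 * d^2))
noncomputable def I0 (c d : ℝ) : ℝ := ∫ l in (0:ℝ)..1, wfn c d l
noncomputable def I2 (c d : ℝ) : ℝ := ∫ l in (0:ℝ)..1, l^2 * wfn c d l

lemma wfn_nonneg (c d l : ℝ) : 0 ≤ wfn c d l := Real.sqrt_nonneg _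

lemma wfn_meas (c d : ℝ) : Measurable (wfn c d) := by
  apply Measurable.sqrt
  exact (measurable_const.sub ((measurable_id.pow_const 2))).div
    (measurable_const.sub ((measurable_id.pow_const 2).mul_const _))

lemma denom_pos (hc : 0 < c) {d l : ℝ} (hd0 : 0 ≤ d) (hdc : d ≤ c) (hl0 : 0 ≤ l)
    (hl1 : l < 1) : 0 < c^2 - l^2 * d^2 := by
  have h1 : l^2 * d^2 ≤ l^2 * c^2 := mul_le_mul_of_nonneg_left (by nlinarith) (sq_nonneg l)
  have hl2 : l^2 < 1 := by nlinarith
  have h2 : l^2 * c^2 < c^2 := by nlinarith [mul_pos hc hc]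
  linarith

lemma wfn_le (c : ℝ) (hc : 0 < c) {d : ℝ} (hd0 : 0 ≤ d) (hdc : d ≤ c) {l : ℝ}
    (hl : l ∈ Icc (0:ℝ) 1) : wfn c d l ≤ 1 / c := by
  rcases eq_or_lt_of_le hl.2 with h1 | h1
  · have : wfn c d l = 0 := by simp [wfn, h1]
    rw [this]; positivity
  · have hB := denom_pos hc hd0 hdc hl.1 h1
    have h1d : l^2 * d^2 ≤ l^2 * c^2 := mul_le_mul_of_nonneg_left (by nlinarith) (sq_nonneg l)
    have h : (1 - l^2) / (c^2 - l^2*d^2) ≤ (1/c)^2 := by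
      rw [div_le_iff₀ hB]
      have h2 : (1/c)^2 = 1/c^2 := by ring
      rw [h2, div_mul_eq_mul_div, le_div_iff₀ (by positivity)]
      nlinarith [hl.1]
    calc wfn c d l ≤ Real.sqrt ((1/c)^2) := Real.sqrt_le_sqrt h
    _ = 1/c := Real.sqrt_sq (by positivity)

lemma wfn_ge (c : ℝ) (hc : 0 < c) {d : ℝ} (hd0 : 0 ≤ d) (hdc : d ≤ c) {l : ℝ}
    (hl : l ∈ Icc (0:ℝ) 1) : Real.sqrt (1 - l^2) / c ≤ wfn c d l := by
  obtain ⟨hl0, hl1⟩ := hl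
  rcases eq_or_lt_of_le hl1 with h1 | h1
  · have : wfn c d l = 0 := by simp [wfn, h1]
    rw [this, h1]; simp
  · have hB := denom_pos hc hd0 hdc hl0 h1
    have h : (1 - l^2) / c^2 ≤ (1 - l^2) / (c^2 - l^2*d^2) := by
      apply div_le_div_of_nonneg_left (by nlinarith) hB
      nlinarith [sq_nonneg (l*d)]
    calc Real.sqrt (1 - l^2) / c = Real.sqrt ((1 - l^2)/c^2) := by
          rw [Real.sqrt_div (by nlinarith), Real.sqrt_sq hc.le]
    _ ≤ wfn c d l := Real.sqrt_le_sqrt h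

lemma wfn_intble (c : ℝ) (hc : 0 < c) {d : ℝ} (hd0 : 0 ≤ d) (hdc : d ≤ c) :
    IntervalIntegrable (wfn c d) volume 0 1 := by
  rw [intervalIntegrable_iff_integrableOn_Ioc_of_le zero_le_one]
  apply Measure.integrableOn_of_bounded (M := 1/c) (by simp)
    (wfn_meas c d).aestronglyMeasurable
  refine (ae_restrict_iff' measurableSet_Ioc).mpr (ae_of_all _ fun l hl => ?_)
  rw [Real.norm_eq_abs, abs_of_nonneg (wfn_nonneg c d l)]
  exact wfn_le c hc hd0 hdc ⟨hl.1.le, hl.2⟩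

lemma sq_wfn_intble (c : ℝ) (hc : 0 < c) {d : ℝ} (hd0 : 0 ≤ d) (hdc : d ≤ c) :
    IntervalIntegrable (fun l => l^2 * wfn c d l) volume 0 1 := by
  rw [intervalIntegrable_iff_integrableOn_Ioc_of_le zero_le_one]
  apply Measure.integrableOn_of_bounded (M := 1/c) (by simp)
    ((measurable_id.pow_const 2).mul (wfn_meas c d)).aestronglyMeasurable
  refine (ae_restrict_iff' measurableSet_Ioc).mpr (ae_of_all _ fun l hl => ?_)
  simp only [id_eq, Pi.mul_apply]
  rw [Real.norm_eq_abs, abs_of_nonneg (mul_nonneg (sq_nonneg l) (wfn_nonneg c d l))]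
  calc l^2 * wfn c d l ≤ 1 * wfn c d l := by
        apply mul_le_mul_of_nonneg_right _ (wfn_nonneg c d l)
        nlinarith [hl.1, hl.2]
  _ ≤ 1/c := by rw [one_mul]; exact wfn_le c hc hd0 hdc ⟨hl.1.le, hl.2⟩

lemma lin_intble (c : ℝ) (hc : 0 < c) {d : ℝ} (hd0 : 0 ≤ d) (hdc : d ≤ c) (a b : ℝ) :
    IntervalIntegrable (fun l => (a - l^2 * b) * wfn c d l) volume 0 1 := by
  have h : (fun l => (a - l^2 * b) * wfn c d l)
      = fun l => a * wfn c d l - b * (l^2 * wfn c d l) := by funext l; ring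
  rw [h]
  exact ((wfn_intble c hc hd0 hdc).const_mul a).sub ((sq_wfn_intble c hc hd0 hdc).const_mul b)

lemma lin_integral (c : ℝ) (hc : 0 < c) {d : ℝ} (hd0 : 0 ≤ d) (hdc : d ≤ c) (a b : ℝ) :
    ∫ l in (0:ℝ)..1, (a - l^2 * b) * wfn c d l = a * I0 c d - b * I2 c d := by
  have h : (fun l => (a - l^2 * b) * wfn c d l)
      = fun l => a * wfn c d l - b * (l^2 * wfn c d l) := by funext l; ring
  rw [h, intervalIntegral.integral_sub (((wfn_intble c hc hd0 hdc)).const_mul a)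
    ((sq_wfn_intble c hc hd0 hdc).const_mul b), intervalIntegral.integral_const_mul,
    intervalIntegral.integral_const_mul]
  rfl

lemma Ffun_eq (c : ℝ) (hc : 0 < c) {d : ℝ} (hd0 : 0 ≤ d) (hdc : d ≤ c) (μ : ℝ) :
    Ffun c μ d = μ^2 * I0 c d - d^2 * I2 c d := by
  rw [Ffun]
  have h : ∀ l : ℝ, (μ^2 - l^2 * d^2) * Real.sqrt ((1 - l^2) / (c^2 - l^2*d^2))
      = (μ^2 - l^2 * d^2) * wfn c d l := fun l => rfl
  simp_rw [h]
  exact lin_integral c hc hd0 hdc (μ^2) (d^2)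

lemma I2_pos (c : ℝ) (hc : 0 < c) {d : ℝ} (hd0 : 0 ≤ d) (hdc : d ≤ c) : 0 < I2 c d := by
  have hcont : Continuous fun l : ℝ => l^2 * (Real.sqrt (1 - l^2) / c) :=
    (continuous_pow 2).mul ((Real.continuous_sqrt.comp (by continuity)).div_const c)
  have hle : ∫ l in (0:ℝ)..1, l^2 * (Real.sqrt (1 - l^2)/c) ≤ I2 c d := by
    apply intervalIntegral.integral_mono_on zero_le_one (hcont.intervalIntegrable 0 1)
      (sq_wfn_intble c hc hd0 hdc)
    intro l hl
    exact mul_le_mul_of_nonneg_left (wfn_ge c hc hd0 hdc hl) (sq_nonneg l)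
  have hpos : 0 < ∫ l in (0:ℝ)..1, l^2 * (Real.sqrt (1 - l^2)/c) := by
    apply intervalIntegral.intervalIntegral_pos_of_pos_on (hcont.intervalIntegrable 0 1)
      _ zero_lt_one
    intro l hl
    have h1 : (0:ℝ) < 1 - l^2 := by nlinarith [hl.1, hl.2]
    have h2 := Real.sqrt_pos.mpr h1
    have h3 : 0 < l := hl.1
    positivity
  linarith

lemma I2_lt_I0 (c : ℝ) (hc : 0 < c) {d : ℝ} (hd0 : 0 ≤ d) (hdc : d ≤ c) : I2 c d < I0 c d := by
  have key : 0 < ∫ l in (0:ℝ)..1, (1 - l^2 * 1) * wfn c d l := by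
    have hcont : Continuous fun l : ℝ => (1 - l^2) * (Real.sqrt (1 - l^2) / c) :=
      (by continuity : Continuous fun l : ℝ => 1 - l^2).mul
        ((Real.continuous_sqrt.comp (by continuity)).div_const c)
    have hle : ∫ l in (0:ℝ)..1, (1 - l^2) * (Real.sqrt (1 - l^2)/c)
        ≤ ∫ l in (0:ℝ)..1, (1 - l^2 * 1) * wfn c d l := by
      apply intervalIntegral.integral_mono_on zero_le_one (hcont.intervalIntegrable 0 1)
        (lin_intble c hc hd0 hdc 1 1)
      intro l hl
      have h1 : (0:ℝ) ≤ 1 - l^2 := by nlinarith [hl.1, hl.2]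
      rw [mul_one]
      exact mul_le_mul_of_nonneg_left (wfn_ge c hc hd0 hdc hl) h1
    have hpos : 0 < ∫ l in (0:ℝ)..1, (1 - l^2) * (Real.sqrt (1 - l^2)/c) := by
      apply intervalIntegral.intervalIntegral_pos_of_pos_on (hcont.intervalIntegrable 0 1)
        _ zero_lt_one
      intro l hl
      have h1 : (0:ℝ) < 1 - l^2 := by nlinarith [hl.1, hl.2]
      have := Real.sqrt_pos.mpr h1
      positivity
    linarith
  rw [lin_integral c hc hd0 hdc 1 1] at key
  linarith

lemma I0_pos (c : ℝ) (hc : 0 < c) {d : ℝ} (hd0 : 0 ≤ d) (hdc : d ≤ c) : 0 < I0 c d :=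
  lt_trans (I2_pos c hc hd0 hdc) (I2_lt_I0 c hc hd0 hdc)

lemma ae_ne_one : ∀ᵐ l : ℝ ∂volume, l ≠ 1 := by
  refine MeasureTheory.ae_iff.mpr ?_
  have h : {a : ℝ | ¬ a ≠ 1} = {1} := by ext x; simp
  rw [h]; exact Real.volume_singleton

lemma I0_contOn (c : ℝ) (hc : 0 < c) : ContinuousOn (I0 c) (Icc 0 c) := by
  intro d₀ hd₀
  apply intervalIntegral.continuousWithinAt_of_dominated_interval
      (bound := fun _ => 1/c) (μ := volume)
  · exact Filter.Eventually.of_forall fun x => (wfn_meas c x).aestronglyMeasurable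
  · filter_upwards [self_mem_nhdsWithin] with x hx
    refine ae_of_all _ fun t ht => ?_
    rw [Set.uIoc_of_le zero_le_one] at ht
    rw [Real.norm_eq_abs, abs_of_nonneg (wfn_nonneg c x t)]
    exact wfn_le c hc hx.1 hx.2 ⟨ht.1.le, ht.2⟩
  · exact intervalIntegrable_const
  · filter_upwards [ae_ne_one] with t ht htI
    rw [Set.uIoc_of_le zero_le_one] at htI
    have ht1 : t < 1 := lt_of_le_of_ne htI.2 ht
    have hcont : ContinuousAt (fun x => wfn c x t) d₀ := by
      apply ContinuousAt.sqrt
      apply ContinuousAt.div continuousAt_const (by fun_prop)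
      exact ne_of_gt (denom_pos hc hd₀.1 hd₀.2 htI.1.le ht1)
    exact hcont.continuousWithinAt

lemma I2_contOn (c : ℝ) (hc : 0 < c) : ContinuousOn (I2 c) (Icc 0 c) := by
  intro d₀ hd₀
  apply intervalIntegral.continuousWithinAt_of_dominated_interval
      (bound := fun _ => 1/c) (μ := volume)
  · exact Filter.Eventually.of_forall fun x =>
      ((measurable_id.pow_const 2).mul (wfn_meas c x)).aestronglyMeasurable
  · filter_upwards [self_mem_nhdsWithin] with x hx
    refine ae_of_all _ fun t ht => ?_
    rw [Set.uIoc_of_le zero_le_one] at ht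
    rw [Real.norm_eq_abs, abs_of_nonneg (mul_nonneg (sq_nonneg t) (wfn_nonneg c x t))]
    calc t^2 * wfn c x t ≤ 1 * wfn c x t := by
          apply mul_le_mul_of_nonneg_right _ (wfn_nonneg c x t)
          nlinarith [ht.1, ht.2]
    _ ≤ 1/c := by rw [one_mul]; exact wfn_le c hc hx.1 hx.2 ⟨ht.1.le, ht.2⟩
  · exact intervalIntegrable_const
  · filter_upwards [ae_ne_one] with t ht htI
    rw [Set.uIoc_of_le zero_le_one] at htI
    have ht1 : t < 1 := lt_of_le_of_ne htI.2 ht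
    have hcont : ContinuousAt (fun x => t^2 * wfn c x t) d₀ := by
      apply ContinuousAt.mul continuousAt_const
      apply ContinuousAt.sqrt
      apply ContinuousAt.div continuousAt_const (by fun_prop)
      exact ne_of_gt (denom_pos hc hd₀.1 hd₀.2 htI.1.le ht1)
    exact hcont.continuousWithinAt

lemma I0_at_c (c : ℝ) (hc : 0 < c) : I0 c c = 1/c := by
  rw [I0]
  rw [intervalIntegral.integral_congr_ae (g := fun _ => 1/c) ?_]
  · rw [intervalIntegral.integral_const]; simp
  · filter_upwards [ae_ne_one] with t ht htI
    rw [Set.uIoc_of_le zero_le_one] at htI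
    have ht1 : t < 1 := lt_of_le_of_ne htI.2 ht
    have h1 : (0:ℝ) < 1 - t^2 := by nlinarith [htI.1]
    rw [wfn]
    have h2 : c^2 - t^2*c^2 = (1-t^2)*c^2 := by ring
    rw [h2, div_mul_eq_div_div, div_self (ne_of_gt h1), Real.sqrt_div' 1 (by positivity),
      Real.sqrt_sq hc.le, Real.sqrt_one]

lemma I2_at_c (c : ℝ) (hc : 0 < c) : I2 c c = 1/(3*c) := by
  rw [I2]
  rw [intervalIntegral.integral_congr_ae (g := fun l => l^2 * (1/c)) ?_]
  · rw [intervalIntegral.integral_mul_const, integral_pow]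
    norm_num; ring
  · filter_upwards [ae_ne_one] with t ht htI
    rw [Set.uIoc_of_le zero_le_one] at htI
    have ht1 : t < 1 := lt_of_le_of_ne htI.2 ht
    have h1 : (0:ℝ) < 1 - t^2 := by nlinarith [htI.1]
    congr 1
    rw [wfn]
    have h2 : c^2 - t^2*c^2 = (1-t^2)*c^2 := by ring
    rw [h2, div_mul_eq_div_div, div_self (ne_of_gt h1)]
    rw [Real.sqrt_div' 1 (by positivity), Real.sqrt_sq hc.le, Real.sqrt_one]

noncomputable def mufn (c d : ℝ) : ℝ := d * Real.sqrt (I2 c d / I0 c d)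

lemma mufn_nonneg (c : ℝ) (hc : 0 < c) {d : ℝ} (hd0 : 0 ≤ d) : 0 ≤ mufn c d :=
  mul_nonneg hd0 (Real.sqrt_nonneg _)

lemma mufn_sq (c : ℝ) (hc : 0 < c) {d : ℝ} (hd0 : 0 ≤ d) (hdc : d ≤ c) :
    (mufn c d)^2 = d^2 * (I2 c d / I0 c d) := by
  rw [mufn, mul_pow, Real.sq_sqrt (div_nonneg (I2_pos c hc hd0 hdc).le (I0_pos c hc hd0 hdc).le)]

lemma mufn_lt (c : ℝ) (hc : 0 < c) {d : ℝ} (hd0 : 0 < d) (hdc : d ≤ c) : mufn c d < d := by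
  rw [mufn]
  have h1 : Real.sqrt (I2 c d / I0 c d) < 1 := by
    rw [show (1:ℝ) = Real.sqrt 1 by simp]
    apply Real.sqrt_lt_sqrt (div_nonneg (I2_pos c hc hd0.le hdc).le (I0_pos c hc hd0.le hdc).le)
    rw [div_lt_one (I0_pos c hc hd0.le hdc)]
    exact I2_lt_I0 c hc hd0.le hdc
  nlinarith

lemma mufn_le (c : ℝ) (hc : 0 < c) {d : ℝ} (hd0 : 0 ≤ d) (hdc : d ≤ c) : mufn c d ≤ d := by
  rcases eq_or_lt_of_le hd0 with h | h
  · rw [mufn, ← h]; simp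
  · exact (mufn_lt c hc h hdc).le

lemma Ffun_mufn (c : ℝ) (hc : 0 < c) {d : ℝ} (hd0 : 0 ≤ d) (hdc : d ≤ c) :
    Ffun c (mufn c d) d = 0 := by
  rw [Ffun_eq c hc hd0 hdc, mufn_sq c hc hd0 hdc]
  field_simp [(I0_pos c hc hd0 hdc).ne']
  ring

lemma mufn_contOn (c : ℝ) (hc : 0 < c) : ContinuousOn (mufn c) (Icc 0 c) := by
  apply ContinuousOn.mul continuousOn_id
  apply ContinuousOn.sqrt
  exact (I2_contOn c hc).div (I0_contOn c hc) (fun d hd => (I0_pos c hc hd.1 hd.2).ne')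

lemma mufn_zero (c : ℝ) : mufn c 0 = 0 := by simp [mufn]

lemma mufn_at_c (c : ℝ) (hc : 0 < c) : mufn c c = c / Real.sqrt 3 := by
  rw [mufn, I0_at_c c hc, I2_at_c c hc]
  have h : (1/(3*c)) / (1/c) = (3:ℝ)⁻¹ := by field_simp
  rw [h, Real.sqrt_inv, div_eq_mul_inv]

lemma key_pointwise (c : ℝ) (hc : 0 < c) {d₁ d₂ μ : ℝ} (hd₁ : 0 < d₁) (h12 : d₁ < d₂)
    (hd₂c : d₂ ≤ c) (hμ0 : 0 ≤ μ) (hμ : μ < d₁) {l : ℝ} (hl : l ∈ Icc (0:ℝ) 1) :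
    (μ^2 - l^2*d₁^2) * wfn c d₂ l ≤
      Real.sqrt ((c^2-μ^2)/(c^2 - μ^2*d₂^2/d₁^2)) * ((μ^2 - l^2*d₁^2) * wfn c d₁ l) := by
  have hd₁c : d₁ ≤ c := le_of_lt (lt_of_lt_of_le h12 hd₂c)
  have hP : 0 < c^2 - μ^2 := by nlinarith
  have hd₁sq : 0 < d₁^2 := by positivity
  have hμ2 : μ^2 < d₁^2 := by nlinarith
  have hd₂2 : d₂^2 ≤ c^2 := by nlinarith
  have hQnum : μ^2*d₂^2 < c^2*d₁^2 := by
    calc μ^2*d₂^2 ≤ μ^2*c^2 := mul_le_mul_of_nonneg_left hd₂2 (sq_nonneg μ)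
    _ < d₁^2*c^2 := mul_lt_mul_of_pos_right hμ2 (by positivity)
    _ = c^2*d₁^2 := by ring
  have hQ : 0 < c^2 - μ^2*d₂^2/d₁^2 := by
    rw [sub_pos, div_lt_iff₀ hd₁sq]; nlinarith
  rcases eq_or_lt_of_le hl.2 with h1 | h1
  · have e2 : wfn c d₂ l = 0 := by simp [wfn, h1]
    have e1 : wfn c d₁ l = 0 := by simp [wfn, h1]
    rw [e1, e2]; simp
  · have hB₁ := denom_pos hc hd₁.le hd₁c hl.1 h1
    have hB₂ := denom_pos hc (le_trans hd₁.le h12.le) hd₂c hl.1 h1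
    have hA : (0:ℝ) ≤ 1 - l^2 := by nlinarith [hl.1]
    have expand : (c^2-μ^2)*(c^2-l^2*d₂^2) - (c^2 - μ^2*d₂^2/d₁^2)*(c^2-l^2*d₁^2)
        = c^2*(d₂^2-d₁^2)*(μ^2 - l^2*d₁^2)/d₁^2 := by
      field_simp; ring
    have hdd : (0:ℝ) < d₂^2 - d₁^2 := by nlinarith
    rcases le_or_gt (l^2*d₁^2) (μ^2) with hs | hs
    · have hQB : (c^2 - μ^2*d₂^2/d₁^2)*(c^2-l^2*d₁^2) ≤ (c^2-μ^2)*(c^2-l^2*d₂^2) := by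
        have h0 : 0 ≤ c^2*(d₂^2-d₁^2)*(μ^2 - l^2*d₁^2)/d₁^2 := by
          apply div_nonneg _ hd₁sq.le
          apply mul_nonneg (mul_nonneg (sq_nonneg c) hdd.le) (by linarith)
        linarith
      have hw : wfn c d₂ l ≤ Real.sqrt ((c^2-μ^2)/(c^2 - μ^2*d₂^2/d₁^2)) * wfn c d₁ l := by
        rw [wfn, wfn, ← Real.sqrt_mul (div_pos hP hQ).le]
        apply Real.sqrt_le_sqrt
        rw [div_mul_div_comm, div_le_div_iff₀ hB₂ (mul_pos hQ hB₁)]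
        have h5 := mul_le_mul_of_nonneg_left hQB hA
        linarith
      calc (μ^2 - l^2*d₁^2) * wfn c d₂ l
          ≤ (μ^2 - l^2*d₁^2) * (Real.sqrt ((c^2-μ^2)/(c^2 - μ^2*d₂^2/d₁^2)) * wfn c d₁ l) :=
            mul_le_mul_of_nonneg_left hw (by linarith)
        _ = Real.sqrt ((c^2-μ^2)/(c^2 - μ^2*d₂^2/d₁^2)) * ((μ^2 - l^2*d₁^2) * wfn c d₁ l) := by
            ring
    · have hQB : (c^2-μ^2)*(c^2-l^2*d₂^2) ≤ (c^2 - μ^2*d₂^2/d₁^2)*(c^2-l^2*d₁^2) := by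
        have h0 : c^2*(d₂^2-d₁^2)*(μ^2 - l^2*d₁^2)/d₁^2 ≤ 0 := by
          apply div_nonpos_of_nonpos_of_nonneg _ hd₁sq.le
          apply mul_nonpos_of_nonneg_of_nonpos (mul_nonneg (sq_nonneg c) hdd.le) (by linarith)
        linarith
      have hw : Real.sqrt ((c^2-μ^2)/(c^2 - μ^2*d₂^2/d₁^2)) * wfn c d₁ l ≤ wfn c d₂ l := by
        rw [wfn, wfn, ← Real.sqrt_mul (div_pos hP hQ).le]
        apply Real.sqrt_le_sqrt
        rw [div_mul_div_comm, div_le_div_iff₀ (mul_pos hQ hB₁) hB₂]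
        have h5 := mul_le_mul_of_nonneg_left hQB hA
        linarith
      calc (μ^2 - l^2*d₁^2) * wfn c d₂ l
          ≤ (μ^2 - l^2*d₁^2) * (Real.sqrt ((c^2-μ^2)/(c^2 - μ^2*d₂^2/d₁^2)) * wfn c d₁ l) := by
            apply mul_le_mul_of_nonpos_left hw (by linarith)
        _ = Real.sqrt ((c^2-μ^2)/(c^2 - μ^2*d₂^2/d₁^2)) * ((μ^2 - l^2*d₁^2) * wfn c d₁ l) := by
            ring

lemma mufn_strictMono (c : ℝ) (hc : 0 < c) : StrictMonoOn (mufn c) (Icc 0 c) := by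
  intro d₁ hd₁ d₂ hd₂ h12
  rcases eq_or_lt_of_le hd₁.1 with h0 | h0
  · rw [← h0, mufn_zero]
    have hd2pos : 0 < d₂ := by rw [h0]; exact h12
    have := Real.sqrt_pos.mpr (div_pos (I2_pos c hc hd₂.1 hd₂.2) (I0_pos c hc hd₂.1 hd₂.2))
    rw [mufn]
    exact mul_pos hd2pos this
  · have hd₁c := hd₁.2
    have hd₂0 := hd₂.1
    have hd₂c := hd₂.2
    set μ₁ := mufn c d₁ with hμ₁def
    have hμlt : μ₁ < d₁ := mufn_lt c hc h0 hd₁c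
    have hμ0 : 0 ≤ μ₁ := mufn_nonneg c hc hd₁.1
    set K := Real.sqrt ((c^2-μ₁^2)/(c^2 - μ₁^2*d₂^2/d₁^2)) with hKdef
    have hint : ∫ l in (0:ℝ)..1, (μ₁^2 - l^2*d₁^2) * wfn c d₂ l
        ≤ ∫ l in (0:ℝ)..1, K * ((μ₁^2 - l^2*d₁^2) * wfn c d₁ l) := by
      apply intervalIntegral.integral_mono_on zero_le_one
        (lin_intble c hc hd₂0 hd₂c _ _) ((lin_intble c hc hd₁.1 hd₁c _ _).const_mul K)
      intro l hl
      exact key_pointwise c hc h0 h12 hd₂c hμ0 hμlt hl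
    rw [lin_integral c hc hd₂0 hd₂c, intervalIntegral.integral_const_mul,
      lin_integral c hc hd₁.1 hd₁c] at hint
    have hF1 : μ₁^2 * I0 c d₁ - d₁^2 * I2 c d₁ = 0 := by
      rw [hμ₁def, mufn_sq c hc hd₁.1 hd₁c]
      field_simp [(I0_pos c hc hd₁.1 hd₁c).ne']
      ring
    rw [hF1, mul_zero] at hint
    have hI0₂ := I0_pos c hc hd₂0 hd₂c
    have hI2₂ := I2_pos c hc hd₂0 hd₂c
    have hdsq : d₁^2 < d₂^2 := by nlinarith
    have e : d₂^2 * (I2 c d₂ / I0 c d₂) * I0 c d₂ = d₂^2 * I2 c d₂ := by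
      field_simp
    have hlt : μ₁^2 < (mufn c d₂)^2 := by
      rw [mufn_sq c hc hd₂0 hd₂c]
      nlinarith [hint, hI0₂, hI2₂, hdsq, e]
    exact lt_of_pow_lt_pow_left₀ 2 (mufn_nonneg c hc hd₂0) hlt

noncomputable def gfun (c d : ℝ) : ℝ := (mufn c d)^2 + d^2/2

lemma gfun_zero (c : ℝ) : gfun c 0 = 0 := by simp [gfun, mufn_zero]

lemma gfun_at_c (c : ℝ) (hc : 0 < c) : gfun c c = c^2/3 + c^2/2 := by
  rw [gfun, mufn_at_c c hc, div_pow, Real.sq_sqrt (by norm_num : (0:ℝ) ≤ 3)]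

lemma gfun_strictMono (c : ℝ) (hc : 0 < c) : StrictMonoOn (gfun c) (Icc 0 c) := by
  intro d₁ hd₁ d₂ hd₂ h12
  have h1 := mufn_strictMono c hc hd₁ hd₂ h12
  have h2 := mufn_nonneg c hc hd₁.1
  have h3 : d₁^2 < d₂^2 := by nlinarith [hd₁.1]
  rw [gfun, gfun]
  nlinarith

lemma gfun_contOn (c : ℝ) (hc : 0 < c) : ContinuousOn (gfun c) (Icc 0 c) :=
  ((mufn_contOn c hc).pow 2).add ((continuousOn_id.pow 2).div_const 2)

open Classical in
noncomputable def ffun (c ξ : ℝ) : ℝ :=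
  if h : ∃ d, d ∈ Icc 0 c ∧ gfun c d = c^2/2 + ξ then h.choose else 0

lemma ffun_exists (c : ℝ) (hc : 0 < c) {ξ : ℝ} (hξ : ξ ∈ Icc (-c^2/2) (c^2/3)) :
    ∃ d, d ∈ Icc 0 c ∧ gfun c d = c^2/2 + ξ := by
  have h1 : c^2/2 + ξ ∈ Icc (gfun c 0) (gfun c c) := by
    rw [gfun_zero, gfun_at_c c hc]
    constructor
    · linarith [hξ.1]
    · linarith [hξ.2]
  have := intermediate_value_Icc hc.le (gfun_contOn c hc) h1
  obtain ⟨d, hd, hgd⟩ := this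
  exact ⟨d, hd, hgd⟩

lemma ffun_spec (c : ℝ) (hc : 0 < c) {ξ : ℝ} (hξ : ξ ∈ Icc (-c^2/2) (c^2/3)) :
    ffun c ξ ∈ Icc 0 c ∧ gfun c (ffun c ξ) = c^2/2 + ξ := by
  rw [ffun, dif_pos (ffun_exists c hc hξ)]
  exact (ffun_exists c hc hξ).choose_spec

lemma ffun_unique (c : ℝ) (hc : 0 < c) {ξ : ℝ} (hξ : ξ ∈ Icc (-c^2/2) (c^2/3)) {d : ℝ}
    (hd : d ∈ Icc 0 c) (hgd : gfun c d = c^2/2 + ξ) : d = ffun c ξ := by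
  obtain ⟨h1, h2⟩ := ffun_spec c hc hξ
  exact (gfun_strictMono c hc).injOn hd h1 (by rw [hgd, h2])

lemma ffun_strictMono (c : ℝ) (hc : 0 < c) :
    StrictMonoOn (ffun c) (Icc (-c^2/2) (c^2/3)) := by
  intro ξ₁ hξ₁ ξ₂ hξ₂ h12
  by_contra hcon
  push_neg at hcon
  have h1 := ffun_spec c hc hξ₁
  have h2 := ffun_spec c hc hξ₂
  have := (gfun_strictMono c hc).monotoneOn h2.1 h1.1 hcon
  rw [h1.2, h2.2] at this
  linarith

lemma left_mem (c : ℝ) (hc : 0 < c) : (-c^2/2) ∈ Icc (-c^2/2) (c^2/3) :=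
  ⟨le_refl _, by nlinarith⟩

lemma right_mem (c : ℝ) (hc : 0 < c) : (c^2/3) ∈ Icc (-c^2/2) (c^2/3) :=
  ⟨by nlinarith, le_refl _⟩

lemma ffun_at_left (c : ℝ) (hc : 0 < c) : ffun c (-c^2/2) = 0 := by
  refine (ffun_unique c hc (left_mem c hc) ?_ ?_).symm
  · exact ⟨le_refl _, hc.le⟩
  · rw [gfun_zero]; ring

lemma ffun_at_right (c : ℝ) (hc : 0 < c) : ffun c (c^2/3) = c := by
  refine (ffun_unique c hc (right_mem c hc) ?_ ?_).symm
  · exact ⟨hc.le, le_refl _⟩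
  · rw [gfun_at_c c hc]; ring

lemma ffun_surj (c : ℝ) (hc : 0 < c) {y : ℝ} (hy : y ∈ Icc (0:ℝ) c) :
    ∃ ξ' ∈ Icc (-c^2/2) (c^2/3), ffun c ξ' = y := by
  have h0 : gfun c 0 ≤ gfun c y :=
    (gfun_strictMono c hc).monotoneOn ⟨le_refl _, hc.le⟩ hy hy.1
  have h1 : gfun c y ≤ gfun c c :=
    (gfun_strictMono c hc).monotoneOn hy ⟨hc.le, le_refl _⟩ hy.2
  rw [gfun_zero] at h0
  rw [gfun_at_c c hc] at h1
  have hmem : gfun c y - c^2/2 ∈ Icc (-c^2/2) (c^2/3) := ⟨by linarith, by linarith⟩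
  exact ⟨gfun c y - c^2/2, hmem, (ffun_unique c hc hmem hy (by ring)).symm⟩

lemma ffun_contOn (c : ℝ) (hc : 0 < c) : ContinuousOn (ffun c) (Icc (-c^2/2) (c^2/3)) := by
  intro ξ hξ
  have hmono := ffun_strictMono c hc
  have hrt : ξ < c^2/3 → ContinuousWithinAt (ffun c) (Ici ξ) ξ := by
    intro hB
    apply StrictMonoOn.continuousWithinAt_right_of_exists_between hmono
      (Icc_mem_nhdsGE_of_mem ⟨hξ.1, hB⟩)
    intro b hb
    have hfξ := (ffun_spec c hc hξ).1
    have hfξc : ffun c ξ < c := by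
      rcases eq_or_lt_of_le hfξ.2 with he | hlt
      · exfalso
        have h2 := (ffun_spec c hc hξ).2
        rw [he, gfun_at_c c hc] at h2
        linarith
      · exact hlt
    have hyb : min b c ≤ b := min_le_left _ _
    have hyf : ffun c ξ < min b c := lt_min hb hfξc
    have hy0 : (0:ℝ) ≤ min b c := le_trans hfξ.1 hyf.le
    obtain ⟨ξ', hξ', hfξ'⟩ := ffun_surj c hc ⟨hy0, min_le_right _ _⟩
    exact ⟨ξ', hξ', by rw [hfξ']; exact ⟨hyf, hyb⟩⟩
  have hlt : -c^2/2 < ξ → ContinuousWithinAt (ffun c) (Iic ξ) ξ := by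
    intro hA
    apply StrictMonoOn.continuousWithinAt_left_of_exists_between hmono
      (Icc_mem_nhdsLE_of_mem ⟨hA, hξ.2⟩)
    intro b hb
    have hfξ := (ffun_spec c hc hξ).1
    have hfξ0 : 0 < ffun c ξ := by
      have h3 := hmono (left_mem c hc) hξ hA
      rwa [ffun_at_left c hc] at h3
    have hyb : b ≤ max b 0 := le_max_left _ _
    have hyf : max b 0 < ffun c ξ := max_lt hb hfξ0
    obtain ⟨ξ', hξ', hfξ'⟩ := ffun_surj c hc ⟨le_max_right _ _, le_trans hyf.le hfξ.2⟩
    exact ⟨ξ', hξ', by rw [hfξ']; exact ⟨hyb, hyf⟩⟩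
  rcases eq_or_lt_of_le hξ.2 with hB | hB
  · have hA : -c^2/2 < ξ := by nlinarith [hξ.2, sq_nonneg c, hc]
    exact (hlt hA).mono (fun x hx => le_trans hx.2 hB.ge)
  · rcases eq_or_lt_of_le hξ.1 with hA | hA
    · exact (hrt hB).mono (fun x hx => hA ▸ hx.1)
    · exact ((hlt hA).union (hrt hB)).mono
        (fun x _ => (le_total x ξ).imp (fun h => h) (fun h => h))

theorem stmt0 (c : ℝ) (hc : 0 < c) :
    ∃ f μf : ℝ → ℝ,
      (∀ ξ ∈ Set.Icc (-c^2/2) (c^2/3),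
        f ξ ∈ Set.Icc 0 c ∧ μf (f ξ) ∈ Set.Icc 0 (f ξ) ∧
        Ffun c (μf (f ξ)) (f ξ) = 0 ∧ c^2/2 + ξ = (μf (f ξ))^2 + (f ξ)^2/2) ∧
      (∀ ξ ∈ Set.Icc (-c^2/2) (c^2/3), ∀ d μ : ℝ,
        d ∈ Set.Icc 0 c → μ ∈ Set.Icc 0 d → Ffun c μ d = 0 →
        c^2/2 + ξ = μ^2 + d^2/2 → d = f ξ ∧ μ = μf (f ξ)) ∧
      ContinuousOn f (Set.Icc (-c^2/2) (c^2/3)) ∧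
      StrictMonoOn f (Set.Icc (-c^2/2) (c^2/3)) ∧
      f (-c^2/2) = 0 ∧ f (c^2/3) = c ∧
      ContinuousOn μf (Set.Icc 0 c) ∧
      StrictMonoOn μf (Set.Icc 0 c) ∧
      μf 0 = 0 ∧ μf c = c / Real.sqrt 3 := by
  refine ⟨ffun c, mufn c, ?_, ?_, ffun_contOn c hc, ffun_strictMono c hc,
    ffun_at_left c hc, ffun_at_right c hc, mufn_contOn c hc, mufn_strictMono c hc,
    mufn_zero c, mufn_at_c c hc⟩
  · intro ξ hξ
    obtain ⟨hmem, hg⟩ := ffun_spec c hc hξ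
    refine ⟨hmem, ⟨mufn_nonneg c hc hmem.1, mufn_le c hc hmem.1 hmem.2⟩,
      Ffun_mufn c hc hmem.1 hmem.2, ?_⟩
    rw [← hg, gfun]
  · intro ξ hξ d μ hd hμ hF heq
    have hFr := Ffun_eq c hc hd.1 hd.2 μ
    have hlin : μ^2 * I0 c d - d^2 * I2 c d = 0 := by rw [← hFr, hF]
    have hI0 := I0_pos c hc hd.1 hd.2
    have hsq : μ^2 = (mufn c d)^2 := by
      rw [mufn_sq c hc hd.1 hd.2]
      field_simp
      linarith
    have hμeq : μ = mufn c d := by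
      calc μ = Real.sqrt (μ^2) := (Real.sqrt_sq hμ.1).symm
      _ = Real.sqrt ((mufn c d)^2) := by rw [hsq]
      _ = mufn c d := Real.sqrt_sq (mufn_nonneg c hc hd.1)
    have hgd : gfun c d = c^2/2 + ξ := by
      rw [gfun, ← hμeq]; linarith [heq]
    have hd_eq : d = ffun c ξ := ffun_unique c hc hξ hd hgd
    exact ⟨hd_eq, by rw [← hd_eq, hμeq]⟩
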